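/- Let N be even with N/2 a multiple of 4, and let |4;10,11,00,01⟩ be the EAP state whose Bell-pair labels (p_j,q_j) repeat the pattern (1,0),(1,1),(0,0),(0,1) with period 4. Then for arbitrary real J^{xx}, J^{yz}, the Hamiltonian H₃ = Σ_{j=1}^{N} (J^{xx} σ_j^x σ_{j+1}^x + J^{yz} σ_j^y σ_{j+1}^z) satisfies H₃ |4;10,11,00,01⟩ = 0. -/

import Mathlib

open Matrix Finset
open scoped Kronecker

noncomputable section

/-- Pauli X. -/
def σx : Matrix (Fin 2) (Fin 2) ℂ := !![0, 1; 1, 0]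
/-- Pauli Y. -/
def σy : Matrix (Fin 2) (Fin 2) ℂ := !![0, -Complex.I; Complex.I, 0]
/-- Pauli Z. -/
def σz : Matrix (Fin 2) (Fin 2) ℂ := !![1, 0; 0, -1]

/-- Pauli matrices indexed by `0 = x`, `1 = y`, `2 = z`. -/
def pauli : Fin 3 → Matrix (Fin 2) (Fin 2) ℂ := ![σx, σy, σz]

/-- The Bell state `|Φ_{pq}⟩ = (|0⟩|p⟩ + (-1)^q |1⟩|p̄⟩)/√2` on two qubits. -/
def bell (p q : Fin 2) : Fin 2 × Fin 2 → ℂ := fun ab =>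
  ((if ab = (0, p) then 1 else 0) +
    (if ab = (1, p + 1) then ((-1 : ℂ)) ^ (q : ℕ) else 0)) / (Real.sqrt 2 : ℂ)

/-- Signs `ω^x = (-1)^q`, `ω^y = -ω^x ω^z`, `ω^z = (-1)^p`, indexed by `0 = x`, `1 = y`, `2 = z`. -/
def omegaSign (p q : Fin 2) : Fin 3 → ℂ :=
  ![((-1 : ℂ)) ^ (q : ℕ), -(((-1 : ℂ)) ^ (q : ℕ) * ((-1 : ℂ)) ^ (p : ℕ)),
    ((-1 : ℂ)) ^ (p : ℕ)]

/-- Spin configurations of the cyclic chain `Λ = ℤ/N`. -/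
abbrev Cfg (N : ℕ) := ZMod N → Fin 2

/-- The single-site operator `σ_j^A` (acting as `A` on site `j` and identity elsewhere). -/
def pauliAt (N : ℕ) [NeZero N] (j : ZMod N) (A : Matrix (Fin 2) (Fin 2) ℂ) :
    Matrix (Cfg N) (Cfg N) ℂ :=
  Matrix.of fun c c' => if ∀ i, i ≠ j → c i = c' i then A (c j) (c' j) else 0

/-- The Pauli string `⊗_{j∈X} σ_j^{μ_j}`. -/
def pauliString (N : ℕ) [NeZero N] (X : Finset (ZMod N)) (μ : ZMod N → Fin 3) :
    Matrix (Cfg N) (Cfg N) ℂ :=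
  Matrix.of fun c c' =>
    (∏ j ∈ X, pauli (μ j) (c j) (c' j)) * (if ∀ i, i ∉ X → c i = c' i then 1 else 0)

/-- The entangled antipodal pair state `⊗_{j=0}^{M-1} |Φ_{p_j q_j}⟩_{j, j+M}` on a chain
of length `N = 2M`, as an amplitude function on configurations. -/
def eapState (N M : ℕ) [NeZero N] (p q : ZMod N → Fin 2) : Cfg N → ℂ :=
  fun c => ∏ j ∈ Finset.range M,
    bell (p (j : ZMod N)) (q (j : ZMod N)) (c (j : ZMod N), c ((j : ZMod N) + (M : ZMod N)))

/-- Diameter of a subset of the cycle `ℤ/N` (maximal cyclic distance between two points). -/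
def diam (N : ℕ) [NeZero N] (X : Finset (ZMod N)) : ℕ :=
  X.sup fun a => X.sup fun b => min (a - b).val (b - a).val

/-- EAP state whose Bell-pair labels are given by patterns `pl, ql : ℕ → Fin 2`
(indexed by the representative `j ∈ {0,…,M-1}` of each antipodal pair). -/
def eapPat (N M : ℕ) [NeZero N] (pl ql : ℕ → Fin 2) : Cfg N → ℂ :=
  fun c => ∏ j ∈ Finset.range M,
    bell (pl j) (ql j) (c (j : ZMod N), c ((j : ZMod N) + (M : ZMod N)))

lemma bell_rel (p q a d : Fin 2) (μ : Fin 3) :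
    ∑ b : Fin 2, pauli μ a b * bell p q (b, d) =
      omegaSign p q μ * ∑ b : Fin 2, pauli μ d b * bell p q (a, b) := by
  fin_cases p <;> fin_cases q <;> fin_cases μ <;> fin_cases a <;> fin_cases d <;>
    simp [pauli, bell, omegaSign, σx, σy, σz, Fin.sum_univ_two, Prod.ext_iff,
      Fin.ext_iff, ← add_div, - Fin.val_eq_zero_iff] <;> ring

lemma omega_sq (p q : Fin 2) (μ : Fin 3) : omegaSign p q μ * omegaSign p q μ = 1 := by
  fin_cases p <;> fin_cases q <;> fin_cases μ <;> norm_num [omegaSign]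

lemma pauliAt_mulVec (N : ℕ) [NeZero N] (j : ZMod N) (A : Matrix (Fin 2) (Fin 2) ℂ)
    (v : Cfg N → ℂ) (c : Cfg N) :
    (pauliAt N j A).mulVec v c = ∑ b : Fin 2, A (c j) b * v (Function.update c j b) := by
  classical
  rw [Matrix.mulVec, dotProduct]
  have h1 : ∀ c' : Cfg N,
      (pauliAt N j A c c') * v c'
        = if (∀ i, i ≠ j → c i = c' i) then A (c j) (c' j) * v c' else 0 := by
    intro c'
    by_cases h : ∀ i, i ≠ j → c i = c' i <;> simp [pauliAt, h]
  have upd : ∀ a : Cfg N, (∀ i, i ≠ j → c i = a i) → Function.update c j (a j) = a := by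
    intro a ha
    funext i
    by_cases hi : i = j
    · subst hi; simp
    · rw [Function.update_of_ne hi]; exact ha i hi
  simp_rw [h1, ← Finset.sum_filter]
  refine Finset.sum_bij' (i := fun c' _ => c' j) (j := fun b _ => Function.update c j b)
    ?_ ?_ ?_ ?_ ?_
  · intro a ha; exact Finset.mem_univ _
  · intro b hb
    simp only [Finset.mem_filter, Finset.mem_univ, true_and]
    intro i hi; rw [Function.update_of_ne hi]
  · intro a ha
    simp only [Finset.mem_filter, Finset.mem_univ, true_and] at ha
    exact upd a ha
  · intro b hb; simp
  · intro a ha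
    simp only [Finset.mem_filter, Finset.mem_univ, true_and] at ha
    rw [upd a ha]


lemma bell_rel' (p q a d : Fin 2) (μ : Fin 3) :
    ∑ b : Fin 2, pauli μ d b * bell p q (a, b) =
      omegaSign p q μ * ∑ b : Fin 2, pauli μ a b * bell p q (b, d) := by
  rw [bell_rel p q a d μ, ← mul_assoc, omega_sq, one_mul]

lemma pauliAt_mulVec_comm (N : ℕ) [NeZero N] {i j : ZMod N} (h : i ≠ j)
    (A B : Matrix (Fin 2) (Fin 2) ℂ) (v : Cfg N → ℂ) :
    (pauliAt N i A).mulVec ((pauliAt N j B).mulVec v) =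
      (pauliAt N j B).mulVec ((pauliAt N i A).mulVec v) := by
  funext c
  simp only [pauliAt_mulVec, Finset.mul_sum, Function.update_of_ne h,
    Function.update_of_ne h.symm]
  rw [Finset.sum_comm]
  refine Finset.sum_congr rfl fun a _ => Finset.sum_congr rfl fun b _ => ?_
  rw [Function.update_comm h]
  ring


lemma cast_inj_of_lt {N : ℕ} {s t : ℕ} (hs : s < N) (ht : t < N) :
    ((s : ZMod N) = (t : ZMod N)) ↔ s = t := by
  haveI : NeZero N := ⟨by omega⟩
  constructor
  · intro h
    have := congrArg ZMod.val h
    rwa [ZMod.val_cast_of_lt hs, ZMod.val_cast_of_lt ht] at this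
  · intro h; rw [h]

lemma cast_addM (N M s : ℕ) : ((s : ZMod N) + (M : ZMod N)) = (((s + M : ℕ)) : ZMod N) := by
  push_cast; ring

lemma expandFst (N M : ℕ) [NeZero N] (hN : N = 2 * M) (pl ql : ℕ → Fin 2)
    (c : Cfg N) (k0 : ℕ) (hk0 : k0 < M) (b : Fin 2) :
    eapPat N M pl ql (Function.update c ((k0 : ℕ) : ZMod N) b) =
      bell (pl k0) (ql k0) (b, c ((k0 : ZMod N) + (M : ZMod N))) *
        ∏ k ∈ (Finset.range M).erase k0,
          bell (pl k) (ql k) (c ((k : ℕ) : ZMod N), c ((k : ZMod N) + (M : ZMod N))) := by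
  simp only [eapPat]
  rw [← Finset.mul_prod_erase _ _ (Finset.mem_range.mpr hk0)]
  have hne2 : ∀ k : ℕ, k < M → ((k : ZMod N) + (M : ZMod N)) ≠ (k0 : ZMod N) := by
    intro k hk
    rw [cast_addM, Ne, cast_inj_of_lt (by omega) (by omega)]
    omega
  have hne1 : ∀ k : ℕ, k < M → k ≠ k0 → ((k : ℕ) : ZMod N) ≠ (k0 : ZMod N) := by
    intro k hk hkk
    rw [Ne, cast_inj_of_lt (by omega) (by omega)]
    omega
  congr 1
  · exact congrArg _ (Prod.ext_iff.mpr
      ⟨Function.update_self _ _ _, Function.update_of_ne (hne2 k0 hk0) _ _⟩)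
  · refine Finset.prod_congr rfl fun k hk => ?_
    rw [Finset.mem_erase, Finset.mem_range] at hk
    exact congrArg _ (Prod.ext_iff.mpr
      ⟨Function.update_of_ne (hne1 k hk.2 hk.1) _ _, Function.update_of_ne (hne2 k hk.2) _ _⟩)

lemma expandSnd (N M : ℕ) [NeZero N] (hN : N = 2 * M) (pl ql : ℕ → Fin 2)
    (c : Cfg N) (k0 : ℕ) (hk0 : k0 < M) (b : Fin 2) :
    eapPat N M pl ql (Function.update c ((k0 : ZMod N) + (M : ZMod N)) b) =
      bell (pl k0) (ql k0) (c ((k0 : ℕ) : ZMod N), b) *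
        ∏ k ∈ (Finset.range M).erase k0,
          bell (pl k) (ql k) (c ((k : ℕ) : ZMod N), c ((k : ZMod N) + (M : ZMod N))) := by
  simp only [eapPat]
  rw [← Finset.mul_prod_erase _ _ (Finset.mem_range.mpr hk0)]
  have hne2 : ∀ k : ℕ, k < M → k ≠ k0 →
      ((k : ZMod N) + (M : ZMod N)) ≠ ((k0 : ZMod N) + (M : ZMod N)) := by
    intro k hk hkk
    rw [cast_addM, cast_addM, Ne, cast_inj_of_lt (by omega) (by omega)]
    omega
  have hne1 : ∀ k : ℕ, k < M → ((k : ℕ) : ZMod N) ≠ ((k0 : ZMod N) + (M : ZMod N)) := by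
    intro k hk
    rw [cast_addM, Ne, cast_inj_of_lt (by omega) (by omega)]
    omega
  congr 1
  · exact congrArg _ (Prod.ext_iff.mpr
      ⟨Function.update_of_ne (hne1 k0 hk0) _ _, Function.update_self _ _ _⟩)
  · refine Finset.prod_congr rfl fun k hk => ?_
    rw [Finset.mem_erase, Finset.mem_range] at hk
    exact congrArg _ (Prod.ext_iff.mpr
      ⟨Function.update_of_ne (hne1 k hk.2) _ _, Function.update_of_ne (hne2 k hk.2 hk.1) _ _⟩)

lemma single_site (N M : ℕ) [NeZero N] (hN : N = 2 * M) (hM0 : 0 < M)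
    (pl ql : ℕ → Fin 2) (j : ZMod N) (μ : Fin 3) :
    (pauliAt N j (pauli μ)).mulVec (eapPat N M pl ql) =
      omegaSign (pl (j.val % M)) (ql (j.val % M)) μ •
        (pauliAt N (j + (M : ZMod N)) (pauli μ)).mulVec (eapPat N M pl ql) := by
  funext c
  set k0 := j.val % M with hk0def
  have hk0 : k0 < M := Nat.mod_lt _ hM0
  have hjval : j.val < N := ZMod.val_lt j
  have hjcast : j = ((j.val : ℕ) : ZMod N) := (ZMod.natCast_rightInverse j).symm
  simp only [Pi.smul_apply, smul_eq_mul, pauliAt_mulVec]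
  by_cases hc : j.val < M
  · -- first slot: j = ↑k0, j + M = ↑(k0+M) = ↑k0 + ↑M
    have hk0v : k0 = j.val := Nat.mod_eq_of_lt hc
    have hj : j = ((k0 : ℕ) : ZMod N) := by rw [hk0v]; exact hjcast
    rw [hj]
    simp_rw [expandFst N M hN pl ql c k0 hk0, expandSnd N M hN pl ql c k0 hk0]
    simp_rw [← mul_assoc, ← Finset.sum_mul]
    rw [bell_rel (pl k0) (ql k0) (c ((k0 : ℕ) : ZMod N)) (c ((k0 : ZMod N) + (M : ZMod N))) μ]
    ring
  · -- second slot: j = ↑k0 + ↑M, j + M = ↑k0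
    have hk0v : k0 = j.val - M := by
      rw [hk0def, Nat.mod_eq_sub_mod (by omega)]
      exact Nat.mod_eq_of_lt (by omega)
    have hj : j = ((k0 : ZMod N) + (M : ZMod N)) := by
      rw [cast_addM, hjcast]
      congr 1
      omega
    have hj2 : j + (M : ZMod N) = ((k0 : ℕ) : ZMod N) := by
      rw [hj, add_assoc, cast_addM, show M + M = N by omega, ZMod.natCast_self, add_zero]
    rw [hj2, hj]
    simp_rw [expandFst N M hN pl ql c k0 hk0, expandSnd N M hN pl ql c k0 hk0]
    simp_rw [← mul_assoc, ← Finset.sum_mul]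
    rw [bell_rel' (pl k0) (ql k0) (c ((k0 : ℕ) : ZMod N)) (c ((k0 : ZMod N) + (M : ZMod N))) μ]
    ring

lemma sum_mulVec' {ι : Type*} (s : Finset ι) {n : Type*} [Fintype n] [DecidableEq n]
    (f : ι → Matrix n n ℂ) (v : n → ℂ) :
    (∑ i ∈ s, f i).mulVec v = ∑ i ∈ s, (f i).mulVec v := by
  funext x
  simp only [Matrix.mulVec, dotProduct, Finset.sum_apply, Matrix.sum_apply, Finset.sum_mul]
  exact Finset.sum_comm

lemma two_site (N M : ℕ) [NeZero N] (hN : N = 2 * M) (hM4 : 4 ≤ M)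
    (pl ql : ℕ → Fin 2) (j : ZMod N) (μ ν : Fin 3) :
    (pauliAt N j (pauli μ) * pauliAt N (j + 1) (pauli ν)).mulVec (eapPat N M pl ql) =
      (omegaSign (pl (j.val % M)) (ql (j.val % M)) μ *
        omegaSign (pl ((j + 1).val % M)) (ql ((j + 1).val % M)) ν) •
      (pauliAt N (j + (M : ZMod N)) (pauli μ) *
        pauliAt N (j + (M : ZMod N) + 1) (pauli ν)).mulVec (eapPat N M pl ql) := by
  have hM0 : 0 < M := by omega
  haveI : Fact (1 < N) := ⟨by omega⟩
  have hne1 : (1 : ZMod N) + (M : ZMod N) ≠ 0 := by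
    have h0 : (((1 + M : ℕ)) : ZMod N) ≠ ((0 : ℕ) : ZMod N) := by
      rw [Ne, cast_inj_of_lt (by omega) (by omega)]; omega
    push_cast at h0
    exact h0
  have hneA : j ≠ j + 1 + (M : ZMod N) := by
    rw [add_assoc]
    intro h
    exact hne1 (left_eq_add.mp h)
  have hneB : (j + 1 + (M : ZMod N)) ≠ j + (M : ZMod N) := by
    rw [add_right_comm]
    intro h
    exact one_ne_zero (left_eq_add.mp h.symm)
  have harc : j + 1 + (M : ZMod N) = j + (M : ZMod N) + 1 := add_right_comm _ _ _
  rw [← Matrix.mulVec_mulVec, ← Matrix.mulVec_mulVec]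
  rw [single_site N M hN hM0 pl ql (j + 1) ν, Matrix.mulVec_smul,
    pauliAt_mulVec_comm N hneA, single_site N M hN hM0 pl ql j μ, Matrix.mulVec_smul,
    pauliAt_mulVec_comm N hneB, smul_smul, mul_comm, harc]

lemma sign_key (N M : ℕ) [NeZero N] (hN : N = 2 * M) (hM : 4 ∣ M) (hM0 : 0 < M)
    (j : ZMod N) (μ ν : Fin 3) (hμν : (μ = 0 ∧ ν = 0) ∨ (μ = 1 ∧ ν = 2)) :
    omegaSign ((fun k => if k % 4 ≤ 1 then (1 : Fin 2) else 0) (j.val % M))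
        ((fun k => if k % 4 = 0 ∨ k % 4 = 2 then (0 : Fin 2) else 1) (j.val % M)) μ *
      omegaSign ((fun k => if k % 4 ≤ 1 then (1 : Fin 2) else 0) ((j + 1).val % M))
        ((fun k => if k % 4 = 0 ∨ k % 4 = 2 then (0 : Fin 2) else 1) ((j + 1).val % M)) ν
      = -1 := by
  have hM4 : 4 ≤ M := by
    rcases hM with ⟨t, rfl⟩; omega
  have h4N : 4 ∣ N := by
    rcases hM with ⟨t, rfl⟩; exact ⟨2 * t, by omega⟩
  haveI : Fact (1 < N) := ⟨by omega⟩
  have e1 : j.val % M % 4 = j.val % 4 := Nat.mod_mod_of_dvd _ hM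
  have e2 : (j + 1).val % M % 4 = (j.val + 1) % 4 := by
    rw [Nat.mod_mod_of_dvd _ hM, ZMod.val_add, ZMod.val_one, Nat.mod_mod_of_dvd _ h4N]
  simp only []
  rw [e1, e2]
  have hr : j.val % 4 = 0 ∨ j.val % 4 = 1 ∨ j.val % 4 = 2 ∨ j.val % 4 = 3 := by omega
  rcases hμν with ⟨rfl, rfl⟩ | ⟨rfl, rfl⟩ <;>
    rcases hr with h | h | h | h <;>
      rw [h, show (j.val + 1) % 4 = (j.val % 4 + 1) % 4 by omega, h] <;>
        norm_num [omegaSign, Matrix.cons_val_two]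

/-- Model 3: when `N/2` is a multiple of 4, the EAP state `|4;10,11,00,01⟩` (Bell labels
repeating `(1,0),(1,1),(0,0),(0,1)` with period 4) is a zero-energy eigenstate of
`H₃ = Σ_j (J^{xx} σ_j^x σ_{j+1}^x + J^{yz} σ_j^y σ_{j+1}^z)`. -/
theorem model3_eap_eigenstate (N M : ℕ) [NeZero N] (hN : N = 2 * M) (hM : 4 ∣ M)
    (Jxx Jyz : ℝ) :
    (∑ j : ZMod N,
        ((Jxx : ℂ) • (pauliAt N j σx * pauliAt N (j + 1) σx) +
          (Jyz : ℂ) • (pauliAt N j σy * pauliAt N (j + 1) σz))).mulVec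
      (eapPat N M (fun j => if j % 4 ≤ 1 then 1 else 0)
        (fun j => if j % 4 = 0 ∨ j % 4 = 2 then 0 else 1)) = 0 := by
  have hM0 : 0 < M := by
    rcases Nat.eq_zero_or_pos M with h | h
    · exact absurd (by omega : N = 0) (NeZero.ne N)
    · exact h
  have hM4 : 4 ≤ M := by rcases hM with ⟨t, rfl⟩; omega
  rw [sum_mulVec']
  set G : ZMod N → Cfg N → ℂ := fun j =>
    ((Jxx : ℂ) • (pauliAt N j σx * pauliAt N (j + 1) σx) +
      (Jyz : ℂ) • (pauliAt N j σy * pauliAt N (j + 1) σz)).mulVec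
      (eapPat N M (fun j => if j % 4 ≤ 1 then 1 else 0)
        (fun j => if j % 4 = 0 ∨ j % 4 = 2 then 0 else 1)) with hG
  have key : ∀ j : ZMod N, G j = -G (j + (M : ZMod N)) := by
    intro j
    rw [hG]
    simp only [Matrix.add_mulVec, Matrix.smul_mulVec]
    rw [show σx = pauli 0 from rfl, show σy = pauli 1 from rfl, show σz = pauli 2 from rfl]
    rw [two_site N M hN hM4 _ _ j 0 0, two_site N M hN hM4 _ _ j 1 2]
    rw [sign_key N M hN hM hM0 j 0 0 (Or.inl ⟨rfl, rfl⟩),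
      sign_key N M hN hM hM0 j 1 2 (Or.inr ⟨rfl, rfl⟩)]
    simp only [neg_smul, one_smul, smul_neg, neg_add_rev]
    ring_nf
  have h1 : ∑ j : ZMod N, G (j + (M : ZMod N)) = ∑ j : ZMod N, G j :=
    Equiv.sum_comp (Equiv.addRight ((M : ZMod N))) G
  have h2 : ∑ j : ZMod N, G j = -∑ j : ZMod N, G j := by
    conv_lhs => rw [show (∑ j : ZMod N, G j) = ∑ j : ZMod N, -G (j + (M : ZMod N)) from
      Finset.sum_congr rfl fun j _ => key j]
    rw [Finset.sum_neg_distrib, h1]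
  have h3 : ∑ j : ZMod N, G j = 0 := by
    funext c
    have := congrFun h2 c
    simp only [Pi.neg_apply, Finset.sum_apply] at this ⊢
    have h4 : (∑ j : ZMod N, G j c) + (∑ j : ZMod N, G j c) = 0 := by
      nth_rewrite 1 [this]; ring
    exact add_self_eq_zero.mp h4
  exact h3
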